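/- Let (m_n)_{n∈ℕ} be a sequence of positive reals and consider the BPVE with Poisson offspring distributions ρ_n(i) := e^{−m_n} m_n^i/i! for i ∈ ℕ (whose first moment is m_n). If ∑_{n=0}^∞ (∏_{j=0}^{n} m_j)^{−1} < ∞, then the BPVE survives, i.e. p_e < 1. -/

import Mathlib

open Filter ENNReal

/-- Probability generating function `Φ_n(z) := ∑_i ρ_n(i) z^i` of the `n`-th offspring
distribution of a branching process in varying environment (BPVE). -/
noncomputable def Phi (ρ : ℕ → ℕ → ℝ) (n : ℕ) (z : ℝ) : ℝ :=
  ∑' i : ℕ, ρ n i * z ^ i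

/-- The iterated generating functions `H_0(z) := z`, `H_{n+1} := H_n ∘ Φ_n`;
`H_n(0)` is the probability of extinction by generation `n`, and the extinction
probability is `p_e = lim_n H_n(0)`. -/
noncomputable def Hseq (ρ : ℕ → ℕ → ℝ) : ℕ → ℝ → ℝ
  | 0 => fun z => z
  | n + 1 => fun z => Hseq ρ n (Phi ρ n z)

/-- First moment `m_n := ∑_i i ρ_n(i) ∈ [0,∞]` of the `n`-th offspring distribution. -/
noncomputable def mom (ρ : ℕ → ℕ → ℝ) (n : ℕ) : ℝ≥0∞ :=
  ∑' i : ℕ, (i : ℝ≥0∞) * ENNReal.ofReal (ρ n i)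

/-- Second moment `m_n⁽²⁾ := ∑_i i² ρ_n(i) ∈ [0,∞]` of the `n`-th offspring
distribution. -/
noncomputable def mom2 (ρ : ℕ → ℕ → ℝ) (n : ℕ) : ℝ≥0∞ :=
  ∑' i : ℕ, (i : ℝ≥0∞) ^ 2 * ENNReal.ofReal (ρ n i)

lemma poisson_phi (m : ℕ → ℝ) (n : ℕ) (z : ℝ) :
    Phi (fun n i => Real.exp (-m n) * m n ^ i / (Nat.factorial i : ℝ)) n z
      = Real.exp (m n * (z - 1)) := by
  unfold Phi
  have : ∀ i : ℕ, Real.exp (-m n) * m n ^ i / (Nat.factorial i : ℝ) * z ^ i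
      = Real.exp (-m n) * ((m n * z) ^ i / (Nat.factorial i : ℝ)) := by
    intro i; rw [mul_pow]; ring
  simp_rw [this, tsum_mul_left]
  have he : (∑' i : ℕ, (m n * z) ^ i / (Nat.factorial i : ℝ)) = Real.exp (m n * z) := by
    rw [Real.exp_eq_exp_ℝ, NormedSpace.exp_eq_tsum_div]
  rw [he, ← Real.exp_add]
  ring_nf

lemma inv_one_sub_exp_neg (u : ℝ) (hu : 0 < u) : (1 - Real.exp (-u))⁻¹ ≤ u⁻¹ + 1 := by
  have key : u + 1 ≤ Real.exp u := by have := Real.add_one_le_exp u; linarith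
  have h3 : Real.exp (-u) ≤ (1 + u)⁻¹ := by
    rw [Real.exp_neg]
    exact inv_anti₀ (by linarith) (by linarith)
  have h4 : u / (1 + u) ≤ 1 - Real.exp (-u) := by
    have h5 : 1 - (1 + u)⁻¹ = u / (1 + u) := by field_simp; ring
    linarith [h5 ▸ (by linarith : 1 - (1 + u)⁻¹ ≤ 1 - Real.exp (-u))]
  calc (1 - Real.exp (-u))⁻¹ ≤ (u / (1 + u))⁻¹ := inv_anti₀ (by positivity) h4
    _ = u⁻¹ + 1 := by field_simp

lemma bpve_key (m : ℕ → ℝ) (hm : ∀ n, 0 < m n) :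
    ∀ n : ℕ, ∀ z : ℝ, z < 1 →
      Hseq (fun n i => Real.exp (-m n) * m n ^ i / (Nat.factorial i : ℝ)) n z < 1 ∧
      (1 - Hseq (fun n i => Real.exp (-m n) * m n ^ i / (Nat.factorial i : ℝ)) n z)⁻¹ ≤
        (∏ j ∈ Finset.range n, m j)⁻¹ * (1 - z)⁻¹ +
          ∑ k ∈ Finset.range n, (∏ j ∈ Finset.range k, m j)⁻¹ := by
  intro n
  induction n with
  | zero => intro z hz; exact ⟨hz, by simp [Hseq]⟩
  | succ n ih =>
    intro z hz
    set ρ := fun n i => Real.exp (-m n) * m n ^ i / (Nat.factorial i : ℝ) with hρ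
    have hw : Phi ρ n z = Real.exp (-(m n * (1 - z))) := by
      rw [hρ, poisson_phi]; ring_nf
    have hu : 0 < m n * (1 - z) := mul_pos (hm n) (by linarith)
    have hw1 : Phi ρ n z < 1 := by
      rw [hw]; exact Real.exp_lt_one_iff.mpr (by linarith)
    have hHn : Hseq ρ (n + 1) z = Hseq ρ n (Phi ρ n z) := rfl
    obtain ⟨h1, h2⟩ := ih (Phi ρ n z) hw1
    refine ⟨hHn ▸ h1, ?_⟩
    rw [hHn]
    have hinv : (1 - Phi ρ n z)⁻¹ ≤ (m n * (1 - z))⁻¹ + 1 := by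
      rw [hw]; exact inv_one_sub_exp_neg _ hu
    have hMpos : 0 < ∏ j ∈ Finset.range n, m j := Finset.prod_pos fun j _ => hm j
    calc (1 - Hseq ρ n (Phi ρ n z))⁻¹
        ≤ (∏ j ∈ Finset.range n, m j)⁻¹ * (1 - Phi ρ n z)⁻¹ +
          ∑ k ∈ Finset.range n, (∏ j ∈ Finset.range k, m j)⁻¹ := h2
      _ ≤ (∏ j ∈ Finset.range n, m j)⁻¹ * ((m n * (1 - z))⁻¹ + 1) +
          ∑ k ∈ Finset.range n, (∏ j ∈ Finset.range k, m j)⁻¹ := by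
          gcongr
      _ = (∏ j ∈ Finset.range (n + 1), m j)⁻¹ * (1 - z)⁻¹ +
          ∑ k ∈ Finset.range (n + 1), (∏ j ∈ Finset.range k, m j)⁻¹ := by
          rw [Finset.prod_range_succ, Finset.sum_range_succ, mul_inv, mul_inv]
          ring

/-- the BPVE with Poisson offspring distributions
`ρ_n(i) = e^{−m_n} m_n^i / i!` (first moment `m_n`) survives whenever
`∑_n (∏_{j=0}^n m_j)⁻¹ < ∞`. -/
theorem poisson_bpve_survival (m : ℕ → ℝ) (hm : ∀ n, 0 < m n)
    (hsum : Summable fun n => (∏ j ∈ Finset.range (n + 1), m j)⁻¹)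
    (pe : ℝ)
    (hpe : Tendsto
      (fun n => Hseq (fun n i => Real.exp (-m n) * m n ^ i / (Nat.factorial i : ℝ)) n 0)
      atTop (nhds pe)) :
    pe < 1 := by
  set C := 1 + ∑' k : ℕ, (∏ j ∈ Finset.range (k + 1), m j)⁻¹ with hC
  have htsum_nonneg : 0 ≤ ∑' k : ℕ, (∏ j ∈ Finset.range (k + 1), m j)⁻¹ :=
    tsum_nonneg fun k => inv_nonneg.mpr (Finset.prod_nonneg fun j _ => (hm j).le)
  have hCpos : 0 < C := by rw [hC]; linarith
  have hbound : ∀ n, Hseq (fun n i => Real.exp (-m n) * m n ^ i / (Nat.factorial i : ℝ)) n 0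
      ≤ 1 - C⁻¹ := by
    intro n
    obtain ⟨h1, h2⟩ := bpve_key m hm n 0 (by norm_num)
    set s := Hseq (fun n i => Real.exp (-m n) * m n ^ i / (Nat.factorial i : ℝ)) n 0
    have hspos : 0 < 1 - s := by linarith
    have hsum2 : (∏ j ∈ Finset.range n, m j)⁻¹ * (1 - (0:ℝ))⁻¹ +
        ∑ k ∈ Finset.range n, (∏ j ∈ Finset.range k, m j)⁻¹
        = ∑ k ∈ Finset.range (n + 1), (∏ j ∈ Finset.range k, m j)⁻¹ := by
      rw [Finset.sum_range_succ]; norm_num; ring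
    have h3 : (1 - s)⁻¹ ≤ ∑ k ∈ Finset.range (n + 1), (∏ j ∈ Finset.range k, m j)⁻¹ := by
      rw [← hsum2]; exact h2
    have h4 : ∑ k ∈ Finset.range (n + 1), (∏ j ∈ Finset.range k, m j)⁻¹ ≤ C := by
      rw [Finset.sum_range_succ', hC]
      simp only [Finset.range_zero, Finset.prod_empty, inv_one]
      have := Summable.sum_le_tsum (Finset.range n)
        (fun k _ => inv_nonneg.mpr (Finset.prod_nonneg fun j _ => (hm j).le) :
          ∀ k ∉ Finset.range n, (0:ℝ) ≤ (∏ j ∈ Finset.range (k + 1), m j)⁻¹)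
        hsum
      linarith
    have h5 : C⁻¹ ≤ 1 - s := by
      have := inv_anti₀ (by positivity : (0:ℝ) < (1 - s)⁻¹) (le_trans h3 h4)
      rwa [inv_inv] at this
    linarith
  have hle : pe ≤ 1 - C⁻¹ := le_of_tendsto hpe (Eventually.of_forall hbound)
  have : 0 < C⁻¹ := by positivity
  linarith
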